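/- arXiv:1704.03802 — 3 statements merged into one kernel-verified Lean document; each statement's English description precedes it below -/
import Mathlib

section
/- Let Γ ⊂ ℝⁿ be an open convex symmetric cone containing the vector e = (1,…,1), and let f : Γ → ℝ be differentiable, concave, symmetric (invariant under permutations of coordinates) and positively one-homogeneous. Then for every z ∈ Γ one has f(z) ≤ (f(1,…,1)/n)·(z₁ + … + z_n). -/
/-- A concave, symmetric, positively one-homogeneous, differentiable
function on an open convex symmetric cone containing `e = (1,…,1)` satisfies
`f z ≤ (f e / n) * (z₁ + … + z_n)`. -/
theorem concave_symmetric_homogeneous_le_trace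
    (n : ℕ) (hn : 0 < n) (Γ : Set (EuclideanSpace ℝ (Fin n)))
    (hopen : IsOpen Γ) (hconv : Convex ℝ Γ)
    (hcone : ∀ z ∈ Γ, ∀ l : ℝ, 0 < l → l • z ∈ Γ)
    (hΓsym : ∀ z ∈ Γ, ∀ σ : Equiv.Perm (Fin n), (WithLp.toLp 2 (fun i => z (σ i))) ∈ Γ)
    (e : EuclideanSpace ℝ (Fin n)) (he : ∀ i, e i = 1) (heΓ : e ∈ Γ)
    (f : EuclideanSpace ℝ (Fin n) → ℝ)
    (hdiff : ∀ z ∈ Γ, DifferentiableAt ℝ f z)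
    (hconc : ConcaveOn ℝ Γ f)
    (hfsym : ∀ z ∈ Γ, ∀ σ : Equiv.Perm (Fin n), f (WithLp.toLp 2 (fun i => z (σ i))) = f z)
    (hhom : ∀ z ∈ Γ, ∀ l : ℝ, 0 < l → f (l • z) = l * f z) :
    ∀ z ∈ Γ, f z ≤ (f e / n) * ∑ i, z i := by
  haveI : NeZero n := ⟨hn.ne'⟩
  intro z hz
  have hnR : (0:ℝ) < n := by exact_mod_cast hn
  set s : ℝ := ∑ i, z i with hs
  -- the cyclic shifts of z
  have hpΓ : ∀ k : Fin n, (WithLp.toLp 2 (fun i => z ((Equiv.addRight k) i))) ∈ Γ :=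
    fun k => hΓsym z hz (Equiv.addRight k)
  have hpf : ∀ k : Fin n, f (WithLp.toLp 2 (fun i => z ((Equiv.addRight k) i))) = f z :=
    fun k => hfsym z hz (Equiv.addRight k)
  -- the average of the cyclic shifts is (s/n) • e
  have havg : ∑ k : Fin n, ((n:ℝ)⁻¹) • (WithLp.toLp 2 (fun i => z ((Equiv.addRight k) i)) :
      EuclideanSpace ℝ (Fin n)) = (s / n) • e := by
    ext i
    have h1 : (∑ k : Fin n, ((n:ℝ)⁻¹) • (WithLp.toLp 2 (fun i => z ((Equiv.addRight k) i)) :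
        EuclideanSpace ℝ (Fin n))) i = ∑ k : Fin n, ((n:ℝ)⁻¹) * z (i + k) := by
      rw [WithLp.ofLp_sum, Finset.sum_apply]; rfl
    have h2 : ∑ k : Fin n, z (i + k) = s := by
      rw [hs]
      exact Fintype.sum_equiv (Equiv.addLeft i) _ _ (fun k => rfl)
    have h3 : ((s / n) • e) i = s / n := by
      show (s / n) * e i = s / n
      rw [he i, mul_one]
    rw [h1, h3, ← Finset.mul_sum, h2]
    field_simp
  have hwt : ∀ k ∈ (Finset.univ : Finset (Fin n)), (0:ℝ) ≤ (n:ℝ)⁻¹ :=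
    fun _ _ => by positivity
  have hwsum : ∑ _k : Fin n, ((n:ℝ)⁻¹) = 1 := by
    simp [Finset.sum_const]
  have hwΓ : (s / n) • e ∈ Γ :=
    havg ▸ hconv.sum_mem hwt hwsum (fun k _ => hpΓ k)
  have hjensen : f z ≤ f ((s / n) • e) := by
    have hJ := hconc.le_map_sum hwt hwsum (fun k _ => hpΓ k)
    rw [havg] at hJ
    have hsum : ∑ k : Fin n, ((n:ℝ)⁻¹) •
        f (WithLp.toLp 2 (fun i => z ((Equiv.addRight k) i))) = f z := by
      simp only [hpf, smul_eq_mul, Finset.sum_const, Finset.card_univ,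
        Fintype.card_fin, nsmul_eq_mul]
      field_simp
    rw [hsum] at hJ
    exact hJ
  -- f 0 = 0 if 0 ∈ Γ
  have hf0 : (0 : EuclideanSpace ℝ (Fin n)) ∈ Γ → f 0 = 0 := by
    intro h0
    have := hhom 0 h0 2 (by norm_num)
    rw [smul_zero] at this
    linarith
  rcases lt_trichotomy s 0 with hslt | hseq | hsgt
  · -- s < 0 : 0 ∈ Γ, use concavity between w = (s/n) • e and e
    have hne : (n:ℝ) - s ≠ 0 := ne_of_gt (by linarith)
    have ht0 : (0:ℝ) < -s / (n - s) := by
      apply div_pos <;> linarith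
    have ht1 : -s / (n - s) < 1 := by
      rw [div_lt_one (by linarith)]; linarith
    have hcomb : (1 - (-s / (n - s))) • ((s / n) • e) + (-s / (n - s)) • e
        = (0 : EuclideanSpace ℝ (Fin n)) := by
      rw [smul_smul]
      have hc : (1 - (-s / (n - s))) * (s / n) = -(-s / (n - s)) := by
        field_simp
        ring
      rw [hc, neg_smul]
      simp
    have h0Γ : (0 : EuclideanSpace ℝ (Fin n)) ∈ Γ := by
      rw [← hcomb]
      exact hconv hwΓ heΓ (by linarith) ht0.le (by ring)
    have hcc := hconc.2 hwΓ heΓ (show (0:ℝ) ≤ 1 - (-s / (n - s)) by linarith)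
      ht0.le (by ring : (1 - (-s / (n - s))) + (-s / (n - s)) = 1)
    rw [hcomb, hf0 h0Γ] at hcc
    rw [smul_eq_mul, smul_eq_mul] at hcc
    have h1t : 1 - -s / (n - s) = n / (n - s) := by field_simp; ring
    rw [h1t] at hcc
    have hfw : f ((s / n) • e) ≤ (s / n) * f e := by
      calc f ((s / n) • e)
          = ((n - s)/n) * ((n/(n-s)) * f ((s / n) • e) + (-s/(n-s)) * f e)
            + (s/n) * f e := by field_simp; ring
        _ ≤ ((n - s)/n) * 0 + (s/n) * f e := by
            apply add_le_add_left
            exact mul_le_mul_of_nonneg_left hcc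
              (le_of_lt (div_pos (by linarith) hnR))
        _ = (s / n) * f e := by ring
    calc f z ≤ f ((s / n) • e) := hjensen
      _ ≤ (s / n) * f e := hfw
      _ = (f e / n) * s := by ring
  · -- s = 0
    have hw0 : ((s / n) • e : EuclideanSpace ℝ (Fin n)) = 0 := by
      rw [hseq]; simp
    rw [hseq, mul_zero]
    rw [hw0] at hwΓ hjensen
    rw [hf0 hwΓ] at hjensen
    exact hjensen
  · -- s > 0
    have hl : (0:ℝ) < s / n := div_pos hsgt hnR
    have hfw : f ((s / n) • e) = (s / n) * f e := hhom e heΓ (s / n) hl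
    calc f z ≤ f ((s / n) • e) := hjensen
      _ = (f e / n) * s := by rw [hfw]; ring
end

section
/- Let Γ ⊂ ℝⁿ be an open convex symmetric cone containing (1,…,1), and let f : Γ → ℝ be differentiable, concave, symmetric, positively one-homogeneous and strictly positive on Γ. Then z₁ + … + z_n > 0 for every z ∈ Γ. -/
/-- A positive, concave, symmetric, positively one-homogeneous,
differentiable function on an open convex symmetric cone containing `(1,…,1)`
forces the trace `z₁ + … + z_n` to be positive on the cone. -/
theorem trace_pos_of_concave_symmetric_homogeneous_pos
    (n : ℕ) (hn : 0 < n) (Γ : Set (EuclideanSpace ℝ (Fin n)))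
    (hopen : IsOpen Γ) (hconv : Convex ℝ Γ)
    (hcone : ∀ z ∈ Γ, ∀ l : ℝ, 0 < l → l • z ∈ Γ)
    (hΓsym : ∀ z ∈ Γ, ∀ σ : Equiv.Perm (Fin n), (WithLp.toLp 2 (fun i => z (σ i)) : EuclideanSpace ℝ (Fin n)) ∈ Γ)
    (e : EuclideanSpace ℝ (Fin n)) (he : ∀ i, e i = 1) (heΓ : e ∈ Γ)
    (f : EuclideanSpace ℝ (Fin n) → ℝ)
    (hdiff : ∀ z ∈ Γ, DifferentiableAt ℝ f z)
    (hconc : ConcaveOn ℝ Γ f)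
    (hfsym : ∀ z ∈ Γ, ∀ σ : Equiv.Perm (Fin n), f (WithLp.toLp 2 (fun i => z (σ i))) = f z)
    (hhom : ∀ z ∈ Γ, ∀ l : ℝ, 0 < l → f (l • z) = l * f z)
    (hpos : ∀ z ∈ Γ, 0 < f z) :
    ∀ z ∈ Γ, 0 < ∑ i, z i := by
  haveI : NeZero n := ⟨hn.ne'⟩
  -- 0 ∉ Γ, else homogeneity gives f 0 = 2 * f 0, contradicting positivity
  have h0 : (0 : EuclideanSpace ℝ (Fin n)) ∉ Γ := by
    intro h0
    have h2 := hhom 0 h0 2 (by norm_num)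
    rw [smul_zero] at h2
    have := hpos 0 h0
    linarith
  intro z hz
  by_contra h
  push_neg at h
  set t : ℝ := (∑ i, z i) / n with ht
  have htn : t ≤ 0 := div_nonpos_of_nonpos_of_nonneg h (Nat.cast_nonneg n)
  -- t • e ∈ Γ as average of cyclic rotations of z
  have hte : t • e ∈ Γ := by
    have hsum : (∑ k : Fin n, ((n : ℝ)⁻¹) •
        (WithLp.toLp 2 (fun i => z ((Equiv.addRight k) i)) : EuclideanSpace ℝ (Fin n))) = t • e := by
      ext i
      have hrot : ∑ k : Fin n, z (i + k) = ∑ j, z j :=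
        Fintype.sum_equiv (Equiv.addLeft i) _ _ (fun k => rfl)
      simp only [WithLp.ofLp_sum, WithLp.ofLp_smul, PiLp.toLp_apply, Finset.sum_apply, PiLp.smul_apply, Pi.smul_apply, Equiv.coe_addRight,
        smul_eq_mul, he i, mul_one]
      rw [← Finset.mul_sum, hrot, ht]
      field_simp
    rw [← hsum]
    refine hconv.sum_mem (fun k _ => by positivity) ?_
      (fun k _ => hΓsym z hz (Equiv.addRight k))
    simp only [Finset.sum_const, Finset.card_univ, Fintype.card_fin, nsmul_eq_mul]
    field_simp
  -- 0 is a convex combination of t • e and e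
  have hlt : (0:ℝ) < 1 - t := by linarith
  have hmem : (1/(1-t)) • (t • e) + (-t/(1-t)) • e ∈ Γ :=
    hconv hte heΓ (by positivity) (div_nonneg (by linarith) hlt.le) (by field_simp; ring)
  have : (1/(1-t)) • (t • e) + (-t/(1-t)) • e = (0 : EuclideanSpace ℝ (Fin n)) := by
    rw [smul_smul, ← add_smul]
    have : 1/(1-t) * t + -t/(1-t) = 0 := by field_simp; ring
    rw [this, zero_smul]
  rw [this] at hmem
  exact h0 hmem
end

section
/- Let C > 0, β > 0 and q < 1. There is no differentiable function φ : (−∞, 0] → (0, ∞) satisfying φ'(t) ≤ −C·(1−t)^{−q}·φ(t)^{1+β} for all t ≤ 0. -/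
/-- There is no positive differentiable function on `(−∞,0]`
satisfying `φ'(t) ≤ −C (1−t)^{−q} φ(t)^{1+β}` when `C > 0`, `β > 0`, `q < 1`. -/
theorem no_ancient_positive_subsolution
    (C β q : ℝ) (hC : 0 < C) (hβ : 0 < β) (hq : q < 1) :
    ¬ ∃ (φ φ' : ℝ → ℝ),
      (∀ t ≤ (0 : ℝ), 0 < φ t) ∧
      (∀ t ≤ (0 : ℝ), HasDerivAt φ (φ' t) t) ∧
      (∀ t ≤ (0 : ℝ), φ' t ≤ -C * (1 - t) ^ (-q) * φ t ^ (1 + β)) := by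
  rintro ⟨φ, φ', hpos, hder, hineq⟩
  have h1q : (0:ℝ) < 1 - q := by linarith
  set A : ℝ := β * C / (1 - q) with hA
  have hApos : 0 < A := by positivity
  -- h t = φ t ^ (-β) + A * (1 - t)^(1-q)
  set h : ℝ → ℝ := fun t => φ t ^ (-β) + A * (1 - t) ^ (1 - q) with hh
  set h' : ℝ → ℝ := fun t =>
    φ' t * (-β) * φ t ^ (-β - 1) + A * (-1 * (1 - q) * (1 - t) ^ (1 - q - 1)) with hh'
  have honet : ∀ t : ℝ, t ≤ 0 → (0:ℝ) < 1 - t := fun t ht => by linarith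
  have hderh : ∀ t ≤ (0:ℝ), HasDerivAt h (h' t) t := by
    intro t ht
    have d1 : HasDerivAt (fun s => φ s ^ (-β)) (φ' t * (-β) * φ t ^ (-β - 1)) t :=
      (hder t ht).rpow_const (Or.inl (ne_of_gt (hpos t ht)))
    have d2 : HasDerivAt (fun s : ℝ => (1 - s)) (-1 : ℝ) t := by
      simpa using (hasDerivAt_id t).const_sub 1
    have d3 : HasDerivAt (fun s : ℝ => (1 - s) ^ (1 - q))
        (-1 * (1 - q) * (1 - t) ^ (1 - q - 1)) t :=
      d2.rpow_const (Or.inl (ne_of_gt (honet t ht)))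
    exact d1.add (d3.const_mul A)
  have hnonneg : ∀ t ∈ Set.Iio (0:ℝ), 0 ≤ h' t := by
    intro t ht
    have ht0 : t ≤ 0 := le_of_lt ht
    have h1t : (0:ℝ) < 1 - t := honet t ht0
    have hφ : 0 < φ t := hpos t ht0
    have key : β * C * (1 - t) ^ (-q) ≤ φ' t * (-β) * φ t ^ (-β - 1) := by
      have := hineq t ht0
      have hm : φ' t * (-β) ≥ (-C * (1 - t) ^ (-q) * φ t ^ (1 + β)) * (-β) := by
        nlinarith [Real.rpow_pos_of_pos hφ (1 + β), Real.rpow_pos_of_pos h1t (-q)]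
      have hmul : (-C * (1 - t) ^ (-q) * φ t ^ (1 + β)) * (-β) * φ t ^ (-β - 1)
          = β * C * (1 - t) ^ (-q) := by
        have h01 : φ t ^ (1 + β) * φ t ^ (-β - 1) = 1 := by
          rw [← Real.rpow_add hφ]
          norm_num [show (1:ℝ) + β + (-β - 1) = 0 by ring, Real.rpow_zero]
        linear_combination β * C * (1 - t) ^ (-q) * h01
      calc β * C * (1 - t) ^ (-q)
          = (-C * (1 - t) ^ (-q) * φ t ^ (1 + β)) * (-β) * φ t ^ (-β - 1) := hmul.symm
        _ ≤ φ' t * (-β) * φ t ^ (-β - 1) := by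
            have hp : 0 < φ t ^ (-β - 1) := Real.rpow_pos_of_pos hφ _
            nlinarith
    have hA2 : A * (-1 * (1 - q) * (1 - t) ^ (1 - q - 1)) = -(β * C * (1 - t) ^ (-q)) := by
      have : (1:ℝ) - q - 1 = -q := by ring
      rw [this]; field_simp [hA]; have e : A * (1 - q) = β * C := (by rw [hA]; exact div_mul_cancel₀ _ h1q.ne'); linear_combination -e
    simp only [hh']
    rw [hA2]
    linarith
  -- monotone on Iic 0
  have hcont : ContinuousOn h (Set.Iic 0) := fun t ht =>
    ((hderh t ht).continuousAt).continuousWithinAt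
  have hmono : MonotoneOn h (Set.Iic 0) := by
    apply monotoneOn_of_deriv_nonneg (convex_Iic 0) hcont
    · intro t ht
      rw [interior_Iic] at ht
      exact ((hderh t ht.le).differentiableAt.differentiableWithinAt)
    · intro t ht
      rw [interior_Iic] at ht
      rw [(hderh t ht.le).deriv]
      exact hnonneg t ht
  -- h 0 = φ 0 ^ (-β) + A
  have hh0 : h 0 = φ 0 ^ (-β) + A := by simp [hh]
  set M : ℝ := φ 0 ^ (-β) + A with hM
  have hMpos : 0 < M := by
    have := Real.rpow_pos_of_pos (hpos 0 le_rfl) (-β); positivity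
  set K : ℝ := M / A with hK
  have hKpos : 0 < K := by positivity
  set t₀ : ℝ := 1 - (K + 1) ^ ((1:ℝ) / (1 - q)) with ht₀
  have hKgt : 1 < (K + 1) ^ ((1:ℝ) / (1 - q)) := by
    exact (Real.one_lt_rpow_iff_of_pos (by linarith)).2 (Or.inl ⟨by linarith, by positivity⟩)
  have ht₀le : t₀ ≤ 0 := by simp only [ht₀]; linarith
  have hval : (1 - t₀) ^ (1 - q) = K + 1 := by
    simp only [ht₀, sub_sub_cancel]
    rw [← Real.rpow_mul (by positivity), one_div_mul_cancel (by linarith : (1:ℝ) - q ≠ 0),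
      Real.rpow_one]
  have h1 : h t₀ ≤ h 0 := hmono (Set.mem_Iic.2 ht₀le) (Set.mem_Iic.2 le_rfl) ht₀le
  have h2 : A * (K + 1) ≤ h t₀ := by
    have := Real.rpow_pos_of_pos (hpos t₀ ht₀le) (-β)
    simp only [hh]; rw [hval]; linarith
  have h3 : A * K = M := by rw [hK, mul_div_assoc']; exact mul_div_cancel_left₀ M hApos.ne'
  rw [hh0] at h1
  nlinarith
end
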